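/- For a birth-and-death chain on {0,...,N} with positive birth rates, positive death rates d_1,...,d_M and zero death rates above level M (where 1 ≤ M ≤ N-1), there exists a quasi-stationary vector ρ : {0,...,N} → ℝ with ρ > 0 on {0,...,M}, ρ = 0 on {M+1,...,N}, Σ_x ρ(x) = 1, and G†ρ = -λρ + λδ_{M+1}, where λ = b_{M+1} ρ(M) > 0. -/

import Mathlib

open Matrix Polynomial Finset

/-- Generator of a birth-and-death chain on `{0,...,N}`:
`Gf(x) = b_{x+1}(f(x+1)-f(x)) + d_x(f(x-1)-f(x))`, with the conventions
`b_{N+1} = 0` (built in via the `if x < N` in the diagonal term; there is no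
state `N+1`) and `d 0 = 0` (imposed as a hypothesis in the theorems). -/
def bdGen (N : ℕ) (b d : ℕ → ℝ) : Matrix (Fin (N+1)) (Fin (N+1)) ℝ :=
  Matrix.of fun x y =>
    if (y : ℕ) = (x : ℕ) + 1 then b ((x : ℕ) + 1)
    else if (y : ℕ) + 1 = (x : ℕ) then d (x : ℕ)
    else if y = x then -((if (x : ℕ) < N then b ((x : ℕ) + 1) else 0) + d (x : ℕ))
    else 0

/-- Existence of a quasi-stationary vector `ρ`: `ρ > 0` on `{0,...,M}`, `ρ = 0`
on `{M+1,...,N}`, `Σρ = 1` and `G†ρ = -λρ + λδ_{M+1}` with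
`λ = b_{M+1} ρ(M) > 0`. -/
noncomputable def pSeq (b d : ℕ → ℝ) (lam : ℝ) : ℕ → ℝ
  | 0 => 1
  | 1 => (b 1 - lam) / d 1
  | (y+2) => ((b (y+2) + d (y+1) - lam) * pSeq b d lam (y+1)
      - b (y+1) * pSeq b d lam y) / d (y+2)

lemma pSeq_cont (b d : ℕ → ℝ) : ∀ y, Continuous fun lam => pSeq b d lam y := by
  intro y
  induction y using Nat.strong_induction_on with
  | _ y ih =>
    match y with
    | 0 => simp only [pSeq]; exact continuous_const
    | 1 => simp only [pSeq]; exact (continuous_const.sub continuous_id).div_const _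
    | (y+2) =>
      have h1 := ih (y+1) (by omega)
      have h2 := ih y (by omega)
      simp only [pSeq]
      exact (((continuous_const.sub continuous_id).mul h1).sub (continuous_const.mul h2)).div_const _


theorem stmt5 (N M : ℕ) (hM : 1 ≤ M) (hMN : M + 1 ≤ N) (b d : ℕ → ℝ)
    (hb : ∀ x, 1 ≤ x → x ≤ N → 0 < b x)
    (hd : ∀ x, 1 ≤ x → x ≤ M → 0 < d x)
    (hdz : ∀ x, M + 1 ≤ x → d x = 0) (hd0 : d 0 = 0) :
    ∃ (ρ : Fin (N+1) → ℝ) (lam : ℝ),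
      lam = b (M+1) * ρ ⟨M, by omega⟩ ∧ 0 < lam ∧
      (∀ x : Fin (N+1), (x : ℕ) ≤ M → 0 < ρ x) ∧
      (∀ x : Fin (N+1), M + 1 ≤ (x : ℕ) → ρ x = 0) ∧
      (∑ x, ρ x) = 1 ∧
      Matrix.vecMul ρ (bdGen N b d)
        = -lam • ρ + lam • (fun x : Fin (N+1) => if (x : ℕ) = M + 1 then (1:ℝ) else 0) := by
  obtain ⟨m, rfl⟩ : ∃ m, M = m + 1 := ⟨M - 1, by omega⟩
  set p := pSeq b d with hpdef
  -- basic facts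
  have hp0 : ∀ lam, p lam 0 = 1 := fun lam => by simp [hpdef, pSeq]
  have hrec1 : ∀ lam, d 1 * p lam 1 = b 1 - lam := by
    intro lam
    have hd1 : d 1 ≠ 0 := ne_of_gt (hd 1 le_rfl (by omega))
    simp only [hpdef, pSeq]
    field_simp
  have hrec : ∀ lam z, z + 2 ≤ m + 1 →
      d (z+2) * p lam (z+2) = (b (z+2) + d (z+1) - lam) * p lam (z+1) - b (z+1) * p lam z := by
    intro lam z hz
    have hdz2 : d (z+2) ≠ 0 := ne_of_gt (hd (z+2) (by omega) hz)
    simp only [hpdef, pSeq]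
    field_simp
  set f : ℝ → ℝ := fun lam => (b (m+2) + d (m+1) - lam) * p lam (m+1) - b (m+1) * p lam m
    with hfdef
  have hfc : Continuous f :=
    ((continuous_const.sub continuous_id).mul (pSeq_cont b d (m+1))).sub
      (continuous_const.mul (pSeq_cont b d m))
  -- positivity at 0
  have hp0pos : ∀ y, y ≤ m + 1 → 0 < p 0 y ∧ (1 ≤ y → d y * p 0 y = b y * p 0 (y-1)) := by
    intro y
    induction y with
    | zero => intro _; exact ⟨by rw [hp0]; norm_num, by omega⟩
    | succ y ih =>
      intro hy
      obtain ⟨ihpos, iheq⟩ := ih (by omega)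
      match y, hy with
      | 0, hy =>
        have hd1 : 0 < d 1 := hd 1 le_rfl (by omega)
        have hb1 : 0 < b 1 := hb 1 le_rfl (by omega)
        have h1 : d 1 * p 0 1 = b 1 - 0 := hrec1 0
        constructor
        · nlinarith
        · intro _; rw [hp0]; simpa using h1
      | (z+1), hy =>
        have heq : d (z+2) * p 0 (z+2) = b (z+2) * p 0 (z+1) := by
          have h1 := hrec 0 z hy
          have h2 := iheq (by omega)
          simp only [Nat.add_sub_cancel] at h2
          linarith
        have hdz2 : 0 < d (z+2) := hd (z+2) (by omega) hy
        have hbz2 : 0 < b (z+2) := hb (z+2) (by omega) (by omega)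
        constructor
        · nlinarith
        · intro _; simpa using heq
  have hf0 : 0 < f 0 := by
    have h1 := (hp0pos (m+1) le_rfl).2 (by omega)
    simp only [Nat.add_sub_cancel] at h1
    have h2 := (hp0pos (m+1) le_rfl).1
    have hb2 : 0 < b (m+2) := hb (m+2) (by omega) (by omega)
    simp only [hfdef]
    nlinarith
  -- the bad set and its infimum
  set B : Set ℝ := {lam | 0 ≤ lam ∧ (f lam ≤ 0 ∨ ∃ y ≤ m + 1, p lam y ≤ 0)} with hBdef
  have hBclosed : IsClosed B := by
    have : B = Set.Ici 0 ∩ ({lam | f lam ≤ 0} ∪ ⋃ y ∈ Set.Iic (m+1), {lam | p lam y ≤ 0}) := by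
      ext lam
      simp only [hBdef, Set.mem_setOf_eq, Set.mem_inter_iff, Set.mem_Ici, Set.mem_union,
        Set.mem_iUnion, Set.mem_Iic, exists_prop]
    rw [this]
    exact isClosed_Ici.inter ((isClosed_le hfc continuous_const).union
      (Set.Finite.isClosed_biUnion (Set.finite_Iic _)
        (fun y _ => isClosed_le (pSeq_cont b d y) continuous_const)))
  have hb1pos : 0 < b 1 := hb 1 le_rfl (by omega)
  have hBne : b 1 ∈ B := by
    refine ⟨le_of_lt hb1pos, Or.inr ⟨1, by omega, ?_⟩⟩
    simp [hpdef, pSeq]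
  have hBbdd : BddBelow B := ⟨0, fun x hx => hx.1⟩
  set lamS := sInf B with hlamSdef
  have hmemB : lamS ∈ B := hBclosed.csInf_mem ⟨_, hBne⟩ hBbdd
  have hlt : ∀ x, 0 ≤ x → x < lamS → 0 < f x ∧ ∀ y ≤ m + 1, 0 < p x y := by
    intro x hx hxlt
    have hnot : x ∉ B := fun hmem => absurd (csInf_le hBbdd hmem) (not_le.mpr hxlt)
    simp only [hBdef, Set.mem_setOf_eq, not_and, not_or, not_exists, not_le] at hnot
    obtain ⟨h1, h2⟩ := hnot hx
    exact ⟨h1, fun y hy => by have := h2 y; exact this hy⟩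
  have hlamS_nonneg : 0 ≤ lamS := le_csInf ⟨_, hBne⟩ (fun x hx => hx.1)
  have hlamS_pos : 0 < lamS := by
    rcases hlamS_nonneg.lt_or_eq with h | h
    · exact h
    · exfalso
      rw [← h] at hmemB
      rcases hmemB.2 with h1 | ⟨y, hy, h1⟩
      · exact absurd h1 (not_le.mpr hf0)
      · exact absurd h1 (not_le.mpr (hp0pos y hy).1)
  have key : ∀ g : ℝ → ℝ, Continuous g → (∀ x, 0 ≤ x → x < lamS → 0 < g x) → 0 ≤ g lamS := by
    intro g hg hpos
    have h1 : Set.Icc (0:ℝ) lamS ⊆ {x | 0 ≤ g x} := by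
      rw [← closure_Ico (ne_of_lt hlamS_pos)]
      exact closure_minimal (fun x hx => le_of_lt (hpos x hx.1 hx.2))
        (isClosed_le continuous_const hg)
    exact h1 ⟨hlamS_nonneg, le_refl _⟩
  have hge : ∀ y, y ≤ m + 1 → 0 ≤ p lamS y := fun y hy =>
    key _ (pSeq_cont b d y) (fun x h1 h2 => (hlt x h1 h2).2 y hy)
  have hgef : 0 ≤ f lamS := key f hfc (fun x h1 h2 => (hlt x h1 h2).1)
  -- descent
  have hdesc : ∀ k, k + 1 ≤ m + 1 → p lamS k = 0 → p lamS (k+1) = 0 → False := by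
    intro k
    induction k with
    | zero => intro _ h0 _; rw [hp0] at h0; norm_num at h0
    | succ k ih =>
      intro hk hpk hpk1
      have h1 := hrec lamS k (by omega)
      rw [hpk, hpk1] at h1
      have hbk : 0 < b (k+1) := hb (k+1) (by omega) (by omega)
      have hk0 : p lamS k = 0 := by nlinarith [h1]
      exact ih (by omega) hk0 hpk
  have hppos : ∀ y, y ≤ m + 1 → 0 < p lamS y := by
    intro y hy
    rcases (hge y hy).lt_or_eq with h | h
    · exact h
    exfalso
    replace h := h.symm
    obtain _ | z := y
    · rw [hp0] at h; norm_num at h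
    rcases Nat.lt_or_ge (z+1) (m+1) with hcase | hcase
    · -- interior zero
      have h1 := hrec lamS z (by omega)
      rw [h] at h1
      have hd2 : 0 < d (z+2) := hd (z+2) (by omega) (by omega)
      have hp2 : 0 ≤ p lamS (z+2) := hge (z+2) (by omega)
      have hbz : 0 < b (z+1) := hb (z+1) (by omega) (by omega)
      have hpz : 0 ≤ p lamS z := hge z (by omega)
      have hz0 : p lamS z = 0 := by nlinarith
      exact hdesc z (by omega) hz0 h
    · -- y = m+1
      have hym : z = m := by omega
      rw [hym] at h
      have hpm : 0 ≤ p lamS m := hge m (by omega)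
      have hbm : 0 < b (m+1) := hb (m+1) (by omega) (by omega)
      have hfge : 0 ≤ f lamS := hgef
      simp only [hfdef, h, mul_zero, zero_sub] at hfge
      have hm0 : p lamS m = 0 := by nlinarith
      exact hdesc m le_rfl hm0 h
  have hfz : f lamS = 0 := by
    rcases hmemB.2 with h1 | ⟨y, hy, h1⟩
    · exact le_antisymm h1 hgef
    · exact absurd h1 (not_le.mpr (hppos y hy))
  -- telescoping
  have htel : ∀ n, n + 1 ≤ m + 1 →
      d (n+1) * p lamS (n+1) - b (n+1) * p lamS n
        = -lamS * ∑ y ∈ Finset.range (n+1), p lamS y := by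
    intro n
    induction n with
    | zero =>
      intro _
      rw [Finset.sum_range_one, hp0]
      have := hrec1 lamS
      linarith
    | succ n ih =>
      intro hn
      have h1 := hrec lamS n (by omega)
      have h2 := ih (by omega)
      rw [Finset.sum_range_succ]
      linear_combination h1 + h2
  set S := ∑ y ∈ Finset.range (m+2), p lamS y with hSdef
  have hSpos : 0 < S := by
    apply Finset.sum_pos
    · intro i hi
      exact hppos i (by simpa using Nat.lt_succ_iff.mp (Finset.mem_range.mp hi))
    · exact ⟨0, Finset.mem_range.mpr (by omega)⟩
  have hbS : b (m+2) * p lamS (m+1) = lamS * S := by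
    have h1 := htel m le_rfl
    have h2 : S = (∑ y ∈ Finset.range (m+1), p lamS y) + p lamS (m+1) := by
      rw [hSdef, Finset.sum_range_succ]
    rw [h2]
    linear_combination hfz - h1
  -- the quasi-stationary vector
  set P : ℕ → ℝ := fun n => if n ≤ m + 1 then p lamS n / S else 0 with hPdef
  have hPle : ∀ n, n ≤ m + 1 → P n = p lamS n / S := fun n hn => if_pos hn
  have hPgt : ∀ n, m + 1 < n → P n = 0 := fun n hn => if_neg (by omega)
  have hlamP : b (m+2) * P (m+1) = lamS := by
    rw [hPle (m+1) le_rfl]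
    rw [mul_div_assoc'] at *
    rw [hbS]
    field_simp
  refine ⟨fun x => P (x : ℕ), b (m+2) * P (m+1), ?_, ?_, ?_, ?_, ?_, ?_⟩
  · norm_num
  · rw [hlamP]; exact hlamS_pos
  · intro x hx
    show 0 < P (x : ℕ)
    rw [hPle _ hx]
    exact div_pos (hppos _ hx) hSpos
  · intro x hx
    show P (x : ℕ) = 0
    exact hPgt _ (by omega)
  · show (∑ x : Fin (N+1), P (x : ℕ)) = 1
    rw [Fin.sum_univ_eq_sum_range P (N+1)]
    have h1 : ∑ i ∈ Finset.range (N+1), P i = ∑ i ∈ Finset.range (m+2), P i := by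
      refine (Finset.sum_subset (Finset.range_subset_range.mpr (by omega)) ?_).symm
      intro i _ hi
      exact hPgt i (by simp [Finset.mem_range, not_lt] at hi; omega)
    rw [h1]
    have h2 : ∀ i ∈ Finset.range (m+2), P i = p lamS i / S := by
      intro i hi
      exact hPle i (by simpa [Nat.lt_succ_iff] using Finset.mem_range.mp hi)
    rw [Finset.sum_congr rfl h2, ← Finset.sum_div]
    exact div_self (ne_of_gt hSpos)
  · -- the eigen-equation
    funext y
    have hjN : (y : ℕ) ≤ N := by omega
    have hS0 : S ≠ 0 := ne_of_gt hSpos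
    -- compute the matrix-vector product as a sum over ℕ
    have hvm : Matrix.vecMul (fun x : Fin (N+1) => P (x : ℕ)) (bdGen N b d) y
        = ∑ i ∈ Finset.range (N+1),
            ((if (y:ℕ) = i+1 then P i * b (i+1) else 0)
              + (if (y:ℕ) + 1 = i then P i * d i else 0)
              + (if (y:ℕ) = i then P i * (-((if i < N then b (i+1) else 0) + d i)) else 0)) := by
      rw [← Fin.sum_univ_eq_sum_range]
      simp only [Matrix.vecMul, dotProduct, bdGen, Matrix.of_apply]
      refine Finset.sum_congr rfl ?_
      intro x _
      simp only [Fin.ext_iff]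
      split_ifs with h1 h2 h3 <;> first | (exfalso; omega) | ring
    rw [hvm, Finset.sum_add_distrib, Finset.sum_add_distrib]
    have h1sum : ∑ i ∈ Finset.range (N+1), (if (y:ℕ) = i+1 then P i * b (i+1) else 0)
        = if (y:ℕ) = ((y:ℕ)-1)+1 then P ((y:ℕ)-1) * b (((y:ℕ)-1)+1) else 0 := by
      refine Finset.sum_eq_single ((y:ℕ)-1) (fun i _ hne => if_neg (by omega)) ?_
      intro hnot
      exact absurd (Finset.mem_range.mpr (by omega)) hnot
    have h2sum : ∑ i ∈ Finset.range (N+1), (if (y:ℕ) + 1 = i then P i * d i else 0)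
        = P ((y:ℕ)+1) * d ((y:ℕ)+1) := by
      rw [Finset.sum_eq_single ((y:ℕ)+1) (fun i _ hne => if_neg (by omega))
        (fun hnot => ?_), if_pos rfl]
      rw [if_pos rfl]
      have hjeq : (y:ℕ) = N := by
        have := Finset.mem_range.not.mp hnot
        omega
      rw [hPgt ((y:ℕ)+1) (by omega), zero_mul]
    have h3sum : ∑ i ∈ Finset.range (N+1),
        (if (y:ℕ) = i then P i * (-((if i < N then b (i+1) else 0) + d i)) else 0)
        = P (y:ℕ) * (-((if (y:ℕ) < N then b ((y:ℕ)+1) else 0) + d (y:ℕ))) := by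
      rw [Finset.sum_eq_single (y:ℕ) (fun i _ hne => if_neg (by omega))
        (fun hnot => absurd (Finset.mem_range.mpr (by omega)) hnot), if_pos rfl]
    rw [h1sum, h2sum, h3sum]
    have hrhs : (-(b (m+2) * P (m+1)) • (fun x : Fin (N+1) => P (x : ℕ))
        + (b (m+2) * P (m+1)) • fun x : Fin (N+1) => if (x : ℕ) = m + 1 + 1 then (1:ℝ) else 0) y
        = -lamS * P (y:ℕ) + lamS * (if (y:ℕ) = m + 1 + 1 then 1 else 0) := by
      simp only [Pi.add_apply, Pi.smul_apply, smul_eq_mul, hlamP, neg_mul]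
    rw [hrhs]
    -- case analysis on the column index
    rcases Nat.eq_zero_or_pos (y:ℕ) with hj0 | hj1
    · -- j = 0
      rw [hj0]
      rw [if_neg (show ¬(0 = 0 - 1 + 1) from by omega),
        if_pos (show 0 < N from by omega),
        if_neg (show ¬(0 = m + 1 + 1) from by omega)]
      rw [hPle 0 (by omega), hPle 1 (by omega), hp0, hd0]
      have h1 := hrec1 lamS
      field_simp
      linear_combination h1
    rcases Nat.lt_or_ge (y:ℕ) (m+1) with hjm | hjm
    · -- 1 ≤ j ≤ m : interior
      rw [if_pos (show (y:ℕ) = ((y:ℕ)-1)+1 from by omega),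
        if_pos (show (y:ℕ) < N from by omega),
        if_neg (show ¬((y:ℕ) = m + 1 + 1) from by omega)]
      rw [hPle ((y:ℕ)-1) (by omega), hPle (y:ℕ) (by omega), hPle ((y:ℕ)+1) (by omega)]
      have h1 := hrec lamS ((y:ℕ)-1) (by omega)
      rw [show (y:ℕ)-1+2 = (y:ℕ)+1 from by omega, show (y:ℕ)-1+1 = (y:ℕ) from by omega] at h1
      rw [show (y:ℕ)-1+1 = (y:ℕ) from by omega]
      field_simp
      linear_combination h1
    rcases Nat.eq_or_lt_of_le hjm with hjm1 | hjm1
    · -- j = m+1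
      rw [← hjm1]
      rw [if_pos (show m+1 = (m+1-1)+1 from by omega),
        if_pos (show m+1 < N from by omega),
        if_neg (show ¬(m+1 = m + 1 + 1) from by omega)]
      rw [show m+1-1 = m from by omega]
      rw [hPle m (by omega), hPle (m+1) (by omega), hPgt (m+1+1) (by omega)]
      rw [show m+1+1 = m+2 from rfl]
      have hfz' : (b (m+2) + d (m+1) - lamS) * p lamS (m+1) - b (m+1) * p lamS m = 0 := hfz
      field_simp
      linear_combination (-1 : ℝ) * hfz'
    rcases Nat.eq_or_lt_of_le hjm1 with hjm2 | hjm2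
    · -- j = m+2
      have hj2 : (y:ℕ) = m + 2 := by omega
      rw [hj2]
      rw [if_pos (show m+2 = (m+2-1)+1 from by omega),
        if_pos (show m+2 = m+1+1 from by omega)]
      rw [show m+2-1 = m+1 from by omega]
      rw [hPle (m+1) le_rfl, hPgt (m+2) (by omega), hPgt (m+2+1) (by omega)]
      rw [show m+1+1 = m+2 from rfl]
      field_simp
      linear_combination hbS
    · -- j ≥ m+3
      have hj3 : m + 3 ≤ (y:ℕ) := by omega
      rw [if_pos (show (y:ℕ) = ((y:ℕ)-1)+1 from by omega),
        if_neg (show ¬((y:ℕ) = m+1+1) from by omega)]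
      rw [hPgt ((y:ℕ)-1) (by omega), hPgt (y:ℕ) (by omega), hPgt ((y:ℕ)+1) (by omega)]
      ring
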